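/- Let ω ∈ ℝ³ with θ = ‖ω‖ ≠ 0, let Ω = [ω]^∧, let A be any 3×2 real matrix, and let B be any 2×2 real matrix. Then Σ_{n=0}^{∞} Ω^{2n+1}AB/(2n+3)! = ((θ − sin θ)/θ³) · ΩAB and Σ_{n=0}^{∞} Ω^{2n}AB/(2n+2)! = AB/2 + ((θ²/2 − 1 + cos θ)/θ⁴) · Ω²AB, both series converging entrywise. -/

import Mathlib

open Matrix

/-- The hat map `[ω]^∧`: the skew-symmetric matrix satisfying `([ω]^∧) x = ω × x`. -/
noncomputable def hat (ω : EuclideanSpace ℝ (Fin 3)) : Matrix (Fin 3) (Fin 3) ℝ :=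
  !![0, -ω 2, ω 1; ω 2, 0, -ω 0; -ω 1, ω 0, 0]

/-- The 3×2 matrix with the two given columns. -/
noncomputable def cols (u w : Fin 3 → ℝ) : Matrix (Fin 3) (Fin 2) ℝ :=
  Matrix.of fun i j => ![u i, w i] j

lemma norm_sq_eq3 (ω : EuclideanSpace ℝ (Fin 3)) :
    ‖ω‖ ^ 2 = ω 0 ^ 2 + ω 1 ^ 2 + ω 2 ^ 2 := by
  rw [EuclideanSpace.norm_eq, Real.sq_sqrt (by positivity)]
  simp [Fin.sum_univ_three, sq]

lemma hat_cube (ω : EuclideanSpace ℝ (Fin 3)) :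
    hat ω ^ 3 = (-(‖ω‖ ^ 2)) • hat ω := by
  rw [norm_sq_eq3]
  ext i j
  fin_cases i <;> fin_cases j <;>
    simp [hat, pow_succ, Matrix.mul_apply, Fin.sum_univ_three] <;> ring

lemma pow_odd_eq {Ω : Matrix (Fin 3) (Fin 3) ℝ} {θ : ℝ}
    (h3 : Ω ^ 3 = (-(θ ^ 2)) • Ω) (n : ℕ) :
    Ω ^ (2 * n + 1) = ((-(θ ^ 2)) ^ n) • Ω := by
  induction n with
  | zero => simp
  | succ n ih =>
    rw [show 2 * (n + 1) + 1 = (2 * n + 1) + 2 by ring, pow_add, ih, smul_mul_assoc,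
      show Ω * Ω ^ 2 = Ω ^ 3 by rw [← pow_succ'], h3, smul_smul, ← pow_succ]

lemma pow_even_eq {Ω : Matrix (Fin 3) (Fin 3) ℝ} {θ : ℝ}
    (h3 : Ω ^ 3 = (-(θ ^ 2)) • Ω) (n : ℕ) :
    Ω ^ (2 * n + 2) = ((-(θ ^ 2)) ^ n) • Ω ^ 2 := by
  have := pow_odd_eq h3 n
  calc Ω ^ (2 * n + 2) = Ω ^ (2 * n + 1) * Ω := by rw [← pow_succ]
    _ = ((-(θ ^ 2)) ^ n) • Ω ^ 2 := by rw [this, smul_mul_assoc, ← sq]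

lemma L1 (θ : ℝ) (hθ0 : θ ≠ 0) :
    HasSum (fun n : ℕ => (-(θ ^ 2)) ^ n / (Nat.factorial (2 * n + 3)))
      ((θ - Real.sin θ) / θ ^ 3) := by
  have hs := Real.hasSum_sin θ
  have h1 : HasSum (fun n : ℕ =>
      (-1 : ℝ) ^ (n + 1) * θ ^ (2 * (n + 1) + 1) / (Nat.factorial (2 * (n + 1) + 1)))
      (Real.sin θ - θ) := by
    refine (hasSum_nat_add_iff (f := fun n : ℕ =>
      (-1 : ℝ) ^ n * θ ^ (2 * n + 1) / (Nat.factorial (2 * n + 1))) 1).2 ?_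
    simpa using hs
  have h2 := (h1.neg).div_const (θ ^ 3)
  convert h2 using 2 with n
  · rfl
  · rw [show 2 * (n + 1) + 1 = 2 * n + 3 by ring]
    have hf : ((Nat.factorial (2 * n + 3)) : ℝ) ≠ 0 := by positivity
    field_simp
    ring
  · ring

lemma L2 (θ : ℝ) (hθ0 : θ ≠ 0) :
    HasSum (fun n : ℕ => (-(θ ^ 2)) ^ n / (Nat.factorial (2 * n + 4)))
      ((θ ^ 2 / 2 - 1 + Real.cos θ) / θ ^ 4) := by
  have hs := Real.hasSum_cos θ
  have h1 : HasSum (fun n : ℕ =>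
      (-1 : ℝ) ^ (n + 2) * θ ^ (2 * (n + 2)) / (Nat.factorial (2 * (n + 2))))
      (Real.cos θ - (1 - θ ^ 2 / 2)) := by
    refine (hasSum_nat_add_iff (f := fun n : ℕ =>
      (-1 : ℝ) ^ n * θ ^ (2 * n) / (Nat.factorial (2 * n))) 2).2 ?_
    have : (∑ i ∈ Finset.range 2, (-1 : ℝ) ^ i * θ ^ (2 * i) / (Nat.factorial (2 * i)))
        = 1 - θ ^ 2 / 2 := by
      simp [Finset.sum_range_succ, Nat.factorial]
      ring
    rw [this]
    convert hs using 1
    · rfl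
    ring
  have h2 := h1.div_const (θ ^ 4)
  convert h2 using 2 with n
  · rfl
  · rw [show 2 * (n + 2) = 2 * n + 4 by ring]
    have hf : ((Nat.factorial (2 * n + 4)) : ℝ) ≠ 0 := by positivity
    field_simp
    ring
  · ring

/-- `HasSum` on matrices (with the product topology) is exactly entrywise convergence. -/
theorem stmt12 (ω : EuclideanSpace ℝ (Fin 3)) (θ : ℝ) (hθ : θ = ‖ω‖) (hθ0 : θ ≠ 0)
    (Ω : Matrix (Fin 3) (Fin 3) ℝ) (hΩ : Ω = hat ω)
    (A : Matrix (Fin 3) (Fin 2) ℝ) (B : Matrix (Fin 2) (Fin 2) ℝ) :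
    HasSum (fun n : ℕ => (Nat.factorial (2 * n + 3) : ℝ)⁻¹ • (Ω ^ (2 * n + 1) * A * B))
      (((θ - Real.sin θ) / θ ^ 3) • (Ω * A * B)) ∧
    HasSum (fun n : ℕ => (Nat.factorial (2 * n + 2) : ℝ)⁻¹ • (Ω ^ (2 * n) * A * B))
      ((2 : ℝ)⁻¹ • (A * B) +
        ((θ ^ 2 / 2 - 1 + Real.cos θ) / θ ^ 4) • (Ω ^ 2 * A * B)) := by
  have h3 : Ω ^ 3 = (-(θ ^ 2)) • Ω := by rw [hΩ, hθ]; exact hat_cube ω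
  constructor
  · have key : (fun n : ℕ => (Nat.factorial (2 * n + 3) : ℝ)⁻¹ • (Ω ^ (2 * n + 1) * A * B))
        = fun n : ℕ => ((-(θ ^ 2)) ^ n / (Nat.factorial (2 * n + 3))) • (Ω * A * B) := by
      funext n
      rw [pow_odd_eq h3, Matrix.smul_mul, Matrix.smul_mul, smul_smul, div_eq_mul_inv, mul_comm]
    rw [key]
    exact (L1 θ hθ0).smul_const _
  · have hshift : HasSum
        (fun n : ℕ => (Nat.factorial (2 * (n + 1) + 2) : ℝ)⁻¹ • (Ω ^ (2 * (n + 1)) * A * B))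
        (((θ ^ 2 / 2 - 1 + Real.cos θ) / θ ^ 4) • (Ω ^ 2 * A * B)) := by
      have key : (fun n : ℕ =>
          (Nat.factorial (2 * (n + 1) + 2) : ℝ)⁻¹ • (Ω ^ (2 * (n + 1)) * A * B))
          = fun n : ℕ => ((-(θ ^ 2)) ^ n / (Nat.factorial (2 * n + 4))) • (Ω ^ 2 * A * B) := by
        funext n
        rw [show 2 * (n + 1) = 2 * n + 2 by ring, show 2 * n + 2 + 2 = 2 * n + 4 by ring,
          pow_even_eq h3, Matrix.smul_mul, Matrix.smul_mul, smul_smul, div_eq_mul_inv, mul_comm]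
      rw [key]
      exact (L2 θ hθ0).smul_const _
    have := (hasSum_nat_add_iff (f := fun n : ℕ =>
      (Nat.factorial (2 * n + 2) : ℝ)⁻¹ • (Ω ^ (2 * n) * A * B)) 1).1 hshift
    convert this using 1
    · rfl
    rw [add_comm]
    congr 1
    simp [Nat.factorial]
    norm_num
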